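/- arXiv:1605.07663 — 5 statements merged into one kernel-verified Lean document; each statement's English description precedes it below -/
import Mathlib

section
/- (Proposition 1) Let Y_nmi, Y_mi be {0,1}-valued random variables and D a nonnegative random variable such that Y_nmi is independent of (Y_mi, 1_{D > 0}), P(Y_mi = 1, D = 0) = 0, and Y_obs = min(Y_nmi + Y_mi, 1). Assume P(D = 0) > 0, P(D > 0) > 0, P(Y_obs = 1) > 0, and P(Y_obs = 1 | D > 0) > 0. Define p_f = P(D > 0 | Y_obs = 1) and R = P(Y_obs = 1 | D > 0) / P(Y_obs = 1 | D = 0), assuming P(Y_obs = 1 | D = 0) > 0. Then p_f * (R - 1)/R = P(Y_nmi = 0, Y_mi = 1 | Y_obs = 1), i.e., the relative-risk estimand equals the MAFF. -/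
open MeasureTheory ProbabilityTheory

theorem stmt4 {Ω : Type*} [MeasurableSpace Ω] (μ : Measure Ω) [IsProbabilityMeasure μ]
    (Ynmi Ymi Yobs : Ω → ℕ) (D : Ω → ℝ)
    (hYnmi : Measurable Ynmi) (hYmi : Measurable Ymi) (hD : Measurable D)
    (hDnonneg : ∀ ω, 0 ≤ D ω)
    (hnmi01 : ∀ ω, Ynmi ω = 0 ∨ Ynmi ω = 1)
    (hmi01 : ∀ ω, Ymi ω = 0 ∨ Ymi ω = 1)
    (hindep : IndepFun Ynmi (fun ω => (Ymi ω, if 0 < D ω then (1 : ℕ) else 0)) μ)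
    (hzero : μ {ω | Ymi ω = 1 ∧ D ω = 0} = 0)
    (hobs : ∀ ω, Yobs ω = min (Ynmi ω + Ymi ω) 1)
    (hD0 : 0 < (μ {ω | D ω = 0}).toReal)
    (hDpos : 0 < (μ {ω | 0 < D ω}).toReal)
    (hY1 : 0 < (μ {ω | Yobs ω = 1}).toReal)
    (pf R : ℝ)
    (hpf : pf = (μ {ω | 0 < D ω ∧ Yobs ω = 1}).toReal / (μ {ω | Yobs ω = 1}).toReal)
    (hR : R = ((μ {ω | Yobs ω = 1 ∧ 0 < D ω}).toReal / (μ {ω | 0 < D ω}).toReal)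
            / ((μ {ω | Yobs ω = 1 ∧ D ω = 0}).toReal / (μ {ω | D ω = 0}).toReal))
    (hYD1 : 0 < (μ {ω | Yobs ω = 1 ∧ 0 < D ω}).toReal / (μ {ω | 0 < D ω}).toReal)
    (hYD0 : 0 < (μ {ω | Yobs ω = 1 ∧ D ω = 0}).toReal / (μ {ω | D ω = 0}).toReal) :
    pf * (R - 1) / R
      = (μ {ω | Ynmi ω = 0 ∧ Ymi ω = 1 ∧ Yobs ω = 1}).toReal / (μ {ω | Yobs ω = 1}).toReal := by
  classical
  set A : Set Ω := {ω | Ynmi ω = 1} with hAdef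
  set B : Set Ω := {ω | Ymi ω = 1} with hBdef
  set Dp : Set Ω := {ω | 0 < D ω} with hDpdef
  set D0 : Set Ω := {ω | D ω = 0} with hD0def
  have hAm : MeasurableSet A := hYnmi (measurableSet_singleton 1)
  have hBm : MeasurableSet B := hYmi (measurableSet_singleton 1)
  have hDpm : MeasurableSet Dp := hD measurableSet_Ioi
  have hD0m : MeasurableSet D0 := hD (measurableSet_singleton 0)
  -- D=0 iff not 0<D
  have hDiff : ∀ ω, D ω = 0 ↔ ¬ 0 < D ω := by
    intro ω
    constructor
    · intro h; simp [h]
    · intro h; exact le_antisymm (not_lt.1 h) (hDnonneg ω)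
  -- Yobs = 1 iff A ∪ B
  have hYobs1 : ∀ ω, Yobs ω = 1 ↔ (Ynmi ω = 1 ∨ Ymi ω = 1) := by
    intro ω
    rw [hobs ω]
    rcases hnmi01 ω with h1 | h1 <;> rcases hmi01 ω with h2 | h2 <;> simp [h1, h2]
  -- independence consequences
  have hpre1 : (fun ω => (Ymi ω, if 0 < D ω then (1 : ℕ) else 0)) ⁻¹' (Set.univ ×ˢ {1}) = Dp := by
    ext ω
    by_cases h : 0 < D ω <;> simp [h, hDpdef]
  have hpre0 : (fun ω => (Ymi ω, if 0 < D ω then (1 : ℕ) else 0)) ⁻¹' (Set.univ ×ˢ {0}) = D0 := by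
    ext ω
    by_cases h : 0 < D ω <;> simp [h, hD0def, hDiff ω]
  have hpreB : (fun ω => (Ymi ω, if 0 < D ω then (1 : ℕ) else 0)) ⁻¹' ({1} ×ˢ {1}) = B ∩ Dp := by
    ext ω
    by_cases h : 0 < D ω <;> simp [h, hBdef, hDpdef]
  have hprA : Ynmi ⁻¹' {1} = A := rfl
  have hprAc : Ynmi ⁻¹' {0} = Aᶜ := by
    ext ω
    rcases hnmi01 ω with h | h <;> simp [hAdef, h]
  have E1 : μ (A ∩ Dp) = μ A * μ Dp := by
    have := hindep.measure_inter_preimage_eq_mul {1} (Set.univ ×ˢ {1})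
      (measurableSet_singleton 1) (MeasurableSet.univ.prod (measurableSet_singleton 1))
    rwa [hpre1, hprA] at this
  have E0 : μ (A ∩ D0) = μ A * μ D0 := by
    have := hindep.measure_inter_preimage_eq_mul {1} (Set.univ ×ˢ {0})
      (measurableSet_singleton 1) (MeasurableSet.univ.prod (measurableSet_singleton 0))
    rwa [hpre0, hprA] at this
  -- key measure computations
  have hnull0 : μ (B ∩ D0) = 0 := by
    apply measure_mono_null _ hzero
    intro ω hω
    exact ⟨hω.1, hω.2⟩
  have M0 : μ {ω | Yobs ω = 1 ∧ D ω = 0} = μ A * μ D0 := by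
    have hset : {ω | Yobs ω = 1 ∧ D ω = 0} = (A ∩ D0) ∪ (B ∩ D0) := by
      ext ω
      simp only [Set.mem_setOf_eq, Set.mem_union, Set.mem_inter_iff, hAdef, hBdef, hD0def,
        hYobs1 ω]
      tauto
    rw [hset, measure_congr (union_ae_eq_left_of_ae_eq_empty (ae_eq_empty.2 hnull0)), E0]
  set q := μ (Aᶜ ∩ B ∩ Dp) with hqdef
  have Mp : μ {ω | Yobs ω = 1 ∧ 0 < D ω} = μ A * μ Dp + q := by
    have hset : {ω | Yobs ω = 1 ∧ 0 < D ω} = (A ∩ Dp) ∪ (Aᶜ ∩ B ∩ Dp) := by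
      ext ω
      simp only [Set.mem_setOf_eq, Set.mem_union, Set.mem_inter_iff, Set.mem_compl_iff,
        hAdef, hBdef, hDpdef, hYobs1 ω]
      tauto
    have hdisj : Disjoint (A ∩ Dp) (Aᶜ ∩ B ∩ Dp) := by
      apply Set.disjoint_left.2
      rintro ω ⟨hωA, _⟩ ⟨⟨hωAc, _⟩, _⟩
      exact hωAc hωA
    rw [hset, measure_union hdisj (((hAm.compl.inter hBm).inter hDpm)), E1]
  have Mq : μ {ω | Ynmi ω = 0 ∧ Ymi ω = 1 ∧ Yobs ω = 1} = q := by
    have hset : {ω | Ynmi ω = 0 ∧ Ymi ω = 1 ∧ Yobs ω = 1} = (Aᶜ ∩ B ∩ Dp) ∪ (Aᶜ ∩ (B ∩ D0)) := by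
      ext ω
      have hcases := hDiff ω
      simp only [Set.mem_setOf_eq, Set.mem_union, Set.mem_inter_iff, Set.mem_compl_iff,
        hAdef, hBdef, hDpdef, hD0def, hYobs1 ω]
      rcases hnmi01 ω with h | h <;> simp [h] <;> tauto
    rw [hset, measure_congr (union_ae_eq_left_of_ae_eq_empty (ae_eq_empty.2 (measure_mono_null Set.inter_subset_right hnull0)))]
  -- pass to reals
  set a : ℝ := (μ A).toReal with hadef
  set d0 : ℝ := (μ D0).toReal with hd0def
  set dp : ℝ := (μ Dp).toReal with hdpdef
  set qr : ℝ := q.toReal with hqrdef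
  set Y1 : ℝ := (μ {ω | Yobs ω = 1}).toReal with hY1def
  have hqr0 : 0 ≤ qr := ENNReal.toReal_nonneg
  have ha0 : 0 ≤ a := ENNReal.toReal_nonneg
  have M0r : (μ {ω | Yobs ω = 1 ∧ D ω = 0}).toReal = a * d0 := by
    rw [M0, ENNReal.toReal_mul]
  have Mpr : (μ {ω | Yobs ω = 1 ∧ 0 < D ω}).toReal = a * dp + qr := by
    rw [Mp, ENNReal.toReal_add (by finiteness) (by finiteness), ENNReal.toReal_mul]
  have Mqr : (μ {ω | Ynmi ω = 0 ∧ Ymi ω = 1 ∧ Yobs ω = 1}).toReal = qr := by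
    rw [Mq]
  have hsetpf : {ω | 0 < D ω ∧ Yobs ω = 1} = {ω | Yobs ω = 1 ∧ 0 < D ω} := by
    ext ω; exact and_comm
  rw [hsetpf] at hpf
  rw [Mpr] at hpf hR hYD1
  rw [M0r] at hR hYD0
  rw [Mqr]
  -- positivity facts
  have hyp : 0 < a * dp + qr := by
    by_contra h
    push_neg at h
    have : a * dp + qr = 0 := le_antisymm h (by positivity)
    rw [this] at hYD1
    simp at hYD1
  have hy0 : 0 < a * d0 := by
    by_contra h
    push_neg at h
    have : a * d0 = 0 := le_antisymm h (by positivity)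
    rw [this] at hYD0
    simp at hYD0
  have hapos : 0 < a := by
    rcases mul_pos_iff.1 hy0 with ⟨h1, _⟩ | ⟨_, h2⟩
    · exact h1
    · exact absurd h2 (not_lt.2 hD0.le)
  have hRpos : 0 < R := by
    rw [hR]; exact div_pos hYD1 hYD0
  subst hpf hR
  field_simp
  ring_nf
end

section
/- (Proposition 2) Under the same setup as Proposition 1 (Y_nmi independent of (Y_mi, 1_{D>0}), P(Y_mi = 1, D = 0) = 0, Y_obs = min(Y_nmi + Y_mi, 1), all relevant conditioning events having positive probability), define p_f = P(D > 0 | Y_obs = 1), p_a = P(D > 0 | Y_obs = 0), and the odds ratio R* = p_f (1 - p_a) / (p_a (1 - p_f)). Then p_f * (R* - 1)/R* = P(Y_mi = 1) / P(Y_obs = 1). -/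
open MeasureTheory ProbabilityTheory

theorem stmt5 {Ω : Type*} [MeasurableSpace Ω] (μ : Measure Ω) [IsProbabilityMeasure μ]
    (Ynmi Ymi Yobs : Ω → ℕ) (D : Ω → ℝ)
    (hYnmi : Measurable Ynmi) (hYmi : Measurable Ymi) (hD : Measurable D)
    (hDnonneg : ∀ ω, 0 ≤ D ω)
    (hnmi01 : ∀ ω, Ynmi ω = 0 ∨ Ynmi ω = 1)
    (hmi01 : ∀ ω, Ymi ω = 0 ∨ Ymi ω = 1)
    (hindep : IndepFun Ynmi (fun ω => (Ymi ω, if 0 < D ω then (1 : ℕ) else 0)) μ)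
    (hzero : μ {ω | Ymi ω = 1 ∧ D ω = 0} = 0)
    (hobs : ∀ ω, Yobs ω = min (Ynmi ω + Ymi ω) 1)
    (hD0 : 0 < (μ {ω | D ω = 0}).toReal)
    (hDpos : 0 < (μ {ω | 0 < D ω}).toReal)
    (hY1 : 0 < (μ {ω | Yobs ω = 1}).toReal)
    (hY0 : 0 < (μ {ω | Yobs ω = 0}).toReal)
    (pf pa Rstar : ℝ)
    (hpf : pf = (μ {ω | 0 < D ω ∧ Yobs ω = 1}).toReal / (μ {ω | Yobs ω = 1}).toReal)
    (hpa : pa = (μ {ω | 0 < D ω ∧ Yobs ω = 0}).toReal / (μ {ω | Yobs ω = 0}).toReal)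
    (hRstar : Rstar = pf * (1 - pa) / (pa * (1 - pf)))
    (hpf0 : 0 < pf) (hpf1 : pf < 1) (hpa0 : 0 < pa) (hpa1 : pa < 1) :
    pf * (Rstar - 1) / Rstar
      = (μ {ω | Ymi ω = 1}).toReal / (μ {ω | Yobs ω = 1}).toReal := by
  classical
  set g : Ω → ℕ × ℕ := fun ω => (Ymi ω, if 0 < D ω then (1 : ℕ) else 0) with hg
  -- measurability facts
  have hYobs : Measurable Yobs := by
    have : Yobs = fun ω => min (Ynmi ω + Ymi ω) 1 := funext hobs
    rw [this]; exact (hYnmi.add hYmi).min measurable_const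
  have hDset : MeasurableSet {ω | 0 < D ω} := hD measurableSet_Ioi
  have hYobs01 : ∀ ω, Yobs ω = 0 ∨ Yobs ω = 1 := by
    intro ω; rw [hobs]; omega
  -- key set identities and independence factorizations
  have set1 : {ω | Yobs ω = 0} = Ynmi ⁻¹' {0} ∩ g ⁻¹' (Prod.fst ⁻¹' {0}) := by
    ext ω
    simp only [Set.mem_setOf_eq, Set.mem_inter_iff, Set.mem_preimage,
      Set.mem_singleton_iff, hobs, hg]
    omega
  have gfst : g ⁻¹' (Prod.fst ⁻¹' {0}) = {ω | Ymi ω = 0} := by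
    ext ω; simp [hg]
  have e1 : μ {ω | Yobs ω = 0} = μ (Ynmi ⁻¹' {0}) * μ {ω | Ymi ω = 0} := by
    rw [set1, hindep.measure_inter_preimage_eq_mul _ _ (measurableSet_singleton 0)
      (measurable_fst (measurableSet_singleton 0)), gfst]
  have set2 : {ω | 0 < D ω ∧ Yobs ω = 0}
      = Ynmi ⁻¹' {0} ∩ g ⁻¹' (Prod.fst ⁻¹' {0} ∩ Prod.snd ⁻¹' {1}) := by
    ext ω
    simp only [Set.mem_setOf_eq, Set.mem_inter_iff, Set.mem_preimage,
      Set.mem_singleton_iff, hobs, hg]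
    by_cases h : 0 < D ω <;> simp [h] <;> omega
  have gsnd : g ⁻¹' (Prod.fst ⁻¹' {0} ∩ Prod.snd ⁻¹' {1}) = {ω | Ymi ω = 0 ∧ 0 < D ω} := by
    ext ω
    by_cases h : 0 < D ω <;> simp [hg, h]
  have e2 : μ {ω | 0 < D ω ∧ Yobs ω = 0}
      = μ (Ynmi ⁻¹' {0}) * μ {ω | Ymi ω = 0 ∧ 0 < D ω} := by
    rw [set2, hindep.measure_inter_preimage_eq_mul _ _ (measurableSet_singleton 0)
      ((measurable_fst (measurableSet_singleton 0)).inter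
        (measurable_snd (measurableSet_singleton 1))), gsnd]
  -- μ {Ymi = 1 ∧ 0 < D} = μ {Ymi = 1}
  have e3a : μ {ω | Ymi ω = 1 ∧ 0 < D ω} = μ {ω | Ymi ω = 1} := by
    apply le_antisymm (measure_mono (fun ω h => h.1))
    calc μ {ω | Ymi ω = 1}
        ≤ μ ({ω | Ymi ω = 1 ∧ 0 < D ω} ∪ {ω | Ymi ω = 1 ∧ D ω = 0}) := by
          apply measure_mono
          intro ω h
          rcases lt_or_eq_of_le (hDnonneg ω) with h' | h'
          · exact Or.inl ⟨h, h'⟩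
          · exact Or.inr ⟨h, h'.symm⟩
      _ ≤ μ {ω | Ymi ω = 1 ∧ 0 < D ω} + μ {ω | Ymi ω = 1 ∧ D ω = 0} := measure_union_le _ _
      _ = μ {ω | Ymi ω = 1 ∧ 0 < D ω} := by rw [hzero, add_zero]
  have m1 : MeasurableSet {ω | Ymi ω = 1 ∧ 0 < D ω} :=
    (hYmi (measurableSet_singleton 1)).inter hDset
  have m2 : MeasurableSet {ω | 0 < D ω ∧ Yobs ω = 0} :=
    hDset.inter (hYobs (measurableSet_singleton 0))
  have m3 : MeasurableSet {ω | Yobs ω = 0} := hYobs (measurableSet_singleton 0)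
  have m4 : MeasurableSet {ω | Ymi ω = 1} := hYmi (measurableSet_singleton 1)
  have e3 : μ {ω | Ymi ω = 0 ∧ 0 < D ω} + μ {ω | Ymi ω = 1} = μ {ω | 0 < D ω} := by
    have hd : Disjoint {ω | Ymi ω = 0 ∧ 0 < D ω} {ω | Ymi ω = 1 ∧ 0 < D ω} := by
      rw [Set.disjoint_left]
      rintro ω ⟨h1, -⟩ ⟨h2, -⟩
      omega
    have hu : {ω | Ymi ω = 0 ∧ 0 < D ω} ∪ {ω | Ymi ω = 1 ∧ 0 < D ω} = {ω | 0 < D ω} := by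
      ext ω
      rcases hmi01 ω with h | h <;> simp [h]
    rw [← e3a, ← measure_union hd m1, hu]
  have e4 : μ {ω | 0 < D ω ∧ Yobs ω = 1} + μ {ω | 0 < D ω ∧ Yobs ω = 0} = μ {ω | 0 < D ω} := by
    have hd : Disjoint {ω | 0 < D ω ∧ Yobs ω = 1} {ω | 0 < D ω ∧ Yobs ω = 0} := by
      rw [Set.disjoint_left]
      rintro ω ⟨-, h1⟩ ⟨-, h2⟩
      omega
    have hu : {ω | 0 < D ω ∧ Yobs ω = 1} ∪ {ω | 0 < D ω ∧ Yobs ω = 0} = {ω | 0 < D ω} := by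
      ext ω
      rcases hYobs01 ω with h | h <;> simp [h]
    rw [← measure_union hd m2, hu]
  have e5 : μ {ω | Yobs ω = 1} + μ {ω | Yobs ω = 0} = 1 := by
    have hd : Disjoint {ω | Yobs ω = 1} {ω | Yobs ω = 0} := by
      rw [Set.disjoint_left]
      intro ω h1 h2
      simp only [Set.mem_setOf_eq] at *
      omega
    have hu : {ω | Yobs ω = 1} ∪ {ω | Yobs ω = 0} = Set.univ := by
      ext ω
      rcases hYobs01 ω with h | h <;> simp [h]
    rw [← measure_union hd m3, hu, measure_univ]
  have e6 : μ {ω | Ymi ω = 0} + μ {ω | Ymi ω = 1} = 1 := by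
    have hd : Disjoint {ω | Ymi ω = 0} {ω | Ymi ω = 1} := by
      rw [Set.disjoint_left]
      intro ω h1 h2
      simp only [Set.mem_setOf_eq] at *
      omega
    have hu : {ω | Ymi ω = 0} ∪ {ω | Ymi ω = 1} = Set.univ := by
      ext ω
      rcases hmi01 ω with h | h <;> simp [h]
    rw [← measure_union hd m4, hu, measure_univ]
  -- pass to reals
  set Q1 := (μ {ω | Yobs ω = 1}).toReal with hQ1
  set Q0 := (μ {ω | Yobs ω = 0}).toReal with hQ0
  set A := (μ {ω | 0 < D ω ∧ Yobs ω = 1}).toReal with hA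
  set B := (μ {ω | 0 < D ω ∧ Yobs ω = 0}).toReal with hB
  set N0 := (μ (Ynmi ⁻¹' {0})).toReal with hN0
  set M := (μ {ω | Ymi ω = 1}).toReal with hM
  set M0 := (μ {ω | Ymi ω = 0}).toReal with hM0
  set K := (μ {ω | Ymi ω = 0 ∧ 0 < D ω}).toReal with hK
  set Dp := (μ {ω | 0 < D ω}).toReal with hDp
  have r1 : Q0 = N0 * M0 := by rw [hQ0, e1, ENNReal.toReal_mul]
  have r2 : B = N0 * K := by rw [hB, e2, ENNReal.toReal_mul]
  have r3 : K + M = Dp := by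
    rw [hK, hM, hDp, ← ENNReal.toReal_add (measure_ne_top _ _) (measure_ne_top _ _), e3]
  have r4 : A + B = Dp := by
    rw [hA, hB, hDp, ← ENNReal.toReal_add (measure_ne_top _ _) (measure_ne_top _ _), e4]
  have r5 : Q1 + Q0 = 1 := by
    rw [hQ1, hQ0, ← ENNReal.toReal_add (measure_ne_top _ _) (measure_ne_top _ _), e5]
    simp
  have r6 : M0 + M = 1 := by
    rw [hM0, hM, ← ENNReal.toReal_add (measure_ne_top _ _) (measure_ne_top _ _), e6]
    simp
  -- the key polynomial identity
  have key : A * Q0 - B * Q1 = M * (Q0 - B) := by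
    linear_combination Q0 * r4 - B * r5 + (Dp - M) * (N0 * r6 + r1) - (1 - M) * (N0 * r3 + r2)
  -- final algebra
  have hpf' : pf ≠ 0 := ne_of_gt hpf0
  have hpa' : pa ≠ 0 := ne_of_gt hpa0
  have h1pf : 1 - pf ≠ 0 := by intro h; nlinarith
  have h1pa : 1 - pa ≠ 0 := by intro h; nlinarith
  have step1 : pf * (Rstar - 1) / Rstar = (pf - pa) / (1 - pa) := by
    rw [hRstar]
    field_simp
    ring
  rw [step1, div_eq_div_iff h1pa (ne_of_gt hY1)]
  have g1 : (pf - pa) * Q1 * Q0 = A * Q0 - B * Q1 := by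
    rw [hpf, hpa]
    field_simp
  have g2 : (1 - pa) * Q0 = Q0 - B := by
    rw [hpa]
    field_simp
  have : (pf - pa) * Q1 * Q0 = M * (1 - pa) * Q0 := by
    rw [g1, key]
    linear_combination -M * g2
  exact mul_right_cancel₀ (ne_of_gt hY0) this
end

section
/- (Proposition 3) Let Y_nmi and Y_mi be independent {0,1}-valued random variables, Y_obs = min(Y_nmi + Y_mi, 1), p = P(Y_obs = 1) with 0 < p < 1, lambda* = P(Y_mi = 1)/p, and lambda = P(Y_nmi = 0, Y_mi = 1 | Y_obs = 1). Then lambda = (lambda* - p * lambda*) / (1 - p * lambda*). -/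
open MeasureTheory ProbabilityTheory

theorem stmt7 {Ω : Type*} [MeasurableSpace Ω] (μ : Measure Ω) [IsProbabilityMeasure μ]
    (Ynmi Ymi Yobs : Ω → ℕ)
    (hYnmi : Measurable Ynmi) (hYmi : Measurable Ymi)
    (hnmi01 : ∀ ω, Ynmi ω = 0 ∨ Ynmi ω = 1)
    (hmi01 : ∀ ω, Ymi ω = 0 ∨ Ymi ω = 1)
    (hindep : IndepFun Ynmi Ymi μ)
    (hobs : ∀ ω, Yobs ω = min (Ynmi ω + Ymi ω) 1)
    (p lamStar lam : ℝ)
    (hp : p = (μ {ω | Yobs ω = 1}).toReal)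
    (hp0 : 0 < p) (hp1 : p < 1)
    (hlamStar : lamStar = (μ {ω | Ymi ω = 1}).toReal / p)
    (hlam : lam = (μ {ω | Ynmi ω = 0 ∧ Ymi ω = 1 ∧ Yobs ω = 1}).toReal
        / (μ {ω | Yobs ω = 1}).toReal) :
    lam = (lamStar - p * lamStar) / (1 - p * lamStar) := by
  -- events as preimages
  have hm0 : MeasurableSet ({0} : Set ℕ) := measurableSet_singleton 0
  have hm1 : MeasurableSet ({1} : Set ℕ) := measurableSet_singleton 1
  set a : ℝ := (μ (Ynmi ⁻¹' {0})).toReal with ha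
  set b : ℝ := (μ (Ymi ⁻¹' {1})).toReal with hb
  -- independence products
  have hI1 : μ (Ynmi ⁻¹' {0} ∩ Ymi ⁻¹' {1})
      = μ (Ynmi ⁻¹' {0}) * μ (Ymi ⁻¹' {1}) :=
    hindep.measure_inter_preimage_eq_mul _ _ hm0 hm1
  have hI0 : μ (Ynmi ⁻¹' {0} ∩ Ymi ⁻¹' {0})
      = μ (Ynmi ⁻¹' {0}) * μ (Ymi ⁻¹' {0}) :=
    hindep.measure_inter_preimage_eq_mul _ _ hm0 hm0
  -- {Ymi = 0} is the complement of {Ymi = 1}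
  have hsetc : Ymi ⁻¹' {0} = (Ymi ⁻¹' {1})ᶜ := by
    ext ω
    rcases hmi01 ω with h | h <;> simp [h]
  have hc : (μ (Ymi ⁻¹' {0})).toReal = 1 - b := by
    rw [hsetc, measure_compl (hYmi hm1) (measure_ne_top μ _), measure_univ,
      ENNReal.toReal_sub_of_le (prob_le_one) (by simp)]
    simp [hb]
  -- Yobs event as complement
  have hset1 : {ω | Yobs ω = 1} = (Ynmi ⁻¹' {0} ∩ Ymi ⁻¹' {0})ᶜ := by
    ext ω
    rcases hnmi01 ω with h1 | h1 <;> rcases hmi01 ω with h2 | h2 <;>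
      simp [hobs ω, h1, h2]
  have hset2 : {ω | Ynmi ω = 0 ∧ Ymi ω = 1 ∧ Yobs ω = 1}
      = Ynmi ⁻¹' {0} ∩ Ymi ⁻¹' {1} := by
    ext ω
    rcases hnmi01 ω with h1 | h1 <;> rcases hmi01 ω with h2 | h2 <;>
      simp [hobs ω, h1, h2]
  -- real values
  have hfin : μ (Ynmi ⁻¹' {0} ∩ Ymi ⁻¹' {0}) ≠ ⊤ := measure_ne_top μ _
  have hpval : p = 1 - a * (1 - b) := by
    rw [hp, hset1, measure_compl ((hYnmi hm0).inter (hYmi hm0)) hfin, measure_univ,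
      ENNReal.toReal_sub_of_le (prob_le_one) (by simp), hI0,
      ENNReal.toReal_mul, hc]
    simp [ha]
  have hnum : (μ {ω | Ynmi ω = 0 ∧ Ymi ω = 1 ∧ Yobs ω = 1}).toReal = a * b := by
    rw [hset2, hI1, ENNReal.toReal_mul]
  have hpnz : p ≠ 0 := ne_of_gt hp0
  have hlam' : lam = a * b / p := by rw [hlam, hnum, ← hp]
  -- b < 1 : since 1 - p = a * (1 - b) > 0 and a ≤ 1, a ≥ 0
  have ha0 : 0 ≤ a := ENNReal.toReal_nonneg
  have hb0 : 0 ≤ b := ENNReal.toReal_nonneg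
  have hab : 0 < a * (1 - b) := by nlinarith [hpval, hp1]
  have hb1 : (1 : ℝ) - b ≠ 0 := by
    have : 0 < 1 - b := by
      rcases lt_or_ge 0 (1 - b) with h | h
      · exact h
      · nlinarith
    linarith
  have hbset : (μ {ω | Ymi ω = 1}).toReal = b := rfl
  rw [hlam', hlamStar, hbset, mul_div_cancel₀ _ hpnz]
  field_simp
  linear_combination b * hpval
end

section
/- Let Y_nmi and Y_mi be independent {0,1}-valued random variables with Y_obs = min(Y_nmi + Y_mi, 1), P(Y_obs = 1) > 0, and P(Y_nmi = 1) > 0. Then P(Y_mi = 1)/P(Y_obs = 1) > P(Y_nmi = 0, Y_mi = 1 | Y_obs = 1) whenever P(Y_mi = 1) > 0; i.e., the odds-ratio estimand strictly exceeds the MAFF when the probability of a non-malaria-caused fever is positive. -/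
open MeasureTheory ProbabilityTheory

theorem stmt8 {Ω : Type*} [MeasurableSpace Ω] (μ : Measure Ω) [IsProbabilityMeasure μ]
    (Ynmi Ymi Yobs : Ω → ℕ)
    (hYnmi : Measurable Ynmi) (hYmi : Measurable Ymi)
    (hnmi01 : ∀ ω, Ynmi ω = 0 ∨ Ynmi ω = 1)
    (hmi01 : ∀ ω, Ymi ω = 0 ∨ Ymi ω = 1)
    (hindep : IndepFun Ynmi Ymi μ)
    (hobs : ∀ ω, Yobs ω = min (Ynmi ω + Ymi ω) 1)
    (hY1 : 0 < (μ {ω | Yobs ω = 1}).toReal)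
    (hnmi_pos : 0 < (μ {ω | Ynmi ω = 1}).toReal)
    (hmi_pos : 0 < (μ {ω | Ymi ω = 1}).toReal) :
    (μ {ω | Ynmi ω = 0 ∧ Ymi ω = 1 ∧ Yobs ω = 1}).toReal / (μ {ω | Yobs ω = 1}).toReal
      < (μ {ω | Ymi ω = 1}).toReal / (μ {ω | Yobs ω = 1}).toReal := by
  apply div_lt_div_of_pos_right _ hY1
  -- reduce to numerator inequality
  have hset : {ω | Ynmi ω = 0 ∧ Ymi ω = 1 ∧ Yobs ω = 1}
      = Ynmi ⁻¹' {0} ∩ Ymi ⁻¹' {1} := by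
    ext ω
    simp only [Set.mem_setOf_eq, Set.mem_inter_iff, Set.mem_preimage, Set.mem_singleton_iff]
    constructor
    · rintro ⟨h1, h2, _⟩; exact ⟨h1, h2⟩
    · rintro ⟨h1, h2⟩; exact ⟨h1, h2, by rw [hobs ω, h1, h2]; rfl⟩
  have hmul : μ (Ynmi ⁻¹' {0} ∩ Ymi ⁻¹' {1})
      = μ (Ynmi ⁻¹' {0}) * μ (Ymi ⁻¹' {1}) :=
    hindep.measure_inter_preimage_eq_mul _ _ (measurableSet_singleton 0)
      (measurableSet_singleton 1)
  have hfin : ∀ s, μ s ≠ ⊤ := fun s => measure_ne_top μ s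
  have hA1 : (μ (Ynmi ⁻¹' {0})).toReal < 1 := by
    have hdisj : Disjoint (Ynmi ⁻¹' {0}) (Ynmi ⁻¹' {1}) := by
      apply Set.disjoint_left.mpr
      intro ω h0 h1
      simp only [Set.mem_preimage, Set.mem_singleton_iff] at h0 h1
      omega
    have hle : μ (Ynmi ⁻¹' {0}) + μ (Ynmi ⁻¹' {1}) ≤ 1 := by
      rw [← measure_union hdisj (hYnmi (measurableSet_singleton 1))]
      exact prob_le_one
    have := ENNReal.toReal_mono (by norm_num) hle
    rw [ENNReal.toReal_add (hfin _) (hfin _), ENNReal.toReal_one] at this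
    have : (μ (Ynmi ⁻¹' {1})).toReal > 0 := hnmi_pos
    linarith [this]
  calc (μ {ω | Ynmi ω = 0 ∧ Ymi ω = 1 ∧ Yobs ω = 1}).toReal
      = (μ (Ynmi ⁻¹' {0})).toReal * (μ (Ymi ⁻¹' {1})).toReal := by
        rw [hset, hmul, ENNReal.toReal_mul]
    _ < 1 * (μ (Ymi ⁻¹' {1})).toReal := by
        apply mul_lt_mul_of_pos_right hA1 hmi_pos
    _ = (μ {ω | Ymi ω = 1}).toReal := by rw [one_mul]; rfl
end

section
/- Let Y_nmi, Y_mi be independent Bernoulli random variables and Y_obs = min(Y_nmi + Y_mi, 1). Suppose additionally D is a nonnegative random variable with {Y_mi = 1} ⊆ {D > 0} a.s. and Y_nmi independent of (Y_mi, D). Then the monotonicity-implied inequality holds: P(D = 0 | Y_obs = 0) ≥ P(D = 0 | Y_obs = 1), provided P(Y_obs = 0) > 0 and P(Y_obs = 1) > 0. -/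
open MeasureTheory ProbabilityTheory

theorem stmt19 {Ω : Type*} [MeasurableSpace Ω] (μ : Measure Ω) [IsProbabilityMeasure μ]
    (Ynmi Ymi Yobs : Ω → ℕ) (D : Ω → ℝ)
    (hYnmi : Measurable Ynmi) (hYmi : Measurable Ymi) (hD : Measurable D)
    (hDnonneg : ∀ ω, 0 ≤ D ω)
    (hnmi01 : ∀ ω, Ynmi ω = 0 ∨ Ynmi ω = 1)
    (hmi01 : ∀ ω, Ymi ω = 0 ∨ Ymi ω = 1)
    (hindep01 : IndepFun Ynmi Ymi μ)
    (hobs : ∀ ω, Yobs ω = min (Ynmi ω + Ymi ω) 1)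
    (hsub : μ {ω | Ymi ω = 1 ∧ ¬ 0 < D ω} = 0)
    (hindep : IndepFun Ynmi (fun ω => (Ymi ω, D ω)) μ)
    (hY0 : 0 < (μ {ω | Yobs ω = 0}).toReal)
    (hY1 : 0 < (μ {ω | Yobs ω = 1}).toReal) :
    (μ {ω | D ω = 0 ∧ Yobs ω = 1}).toReal / (μ {ω | Yobs ω = 1}).toReal
      ≤ (μ {ω | D ω = 0 ∧ Yobs ω = 0}).toReal / (μ {ω | Yobs ω = 0}).toReal := by
  set g : Ω → ℕ × ℝ := fun ω => (Ymi ω, D ω) with hg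
  have hBmeas : MeasurableSet (({0} : Set ℕ) ×ˢ ({0} : Set ℝ)) :=
    (measurableSet_singleton 0).prod (measurableSet_singleton 0)
  -- set identities
  have hset0 : {ω | Yobs ω = 0} = Ynmi ⁻¹' {0} ∩ Ymi ⁻¹' {0} := by
    ext ω
    simp only [Set.mem_setOf_eq, Set.mem_inter_iff, Set.mem_preimage,
      Set.mem_singleton_iff, hobs ω]
    omega
  have hS0 : {ω | D ω = 0 ∧ Yobs ω = 0}
      = Ynmi ⁻¹' {0} ∩ g ⁻¹' (({0} : Set ℕ) ×ˢ ({0} : Set ℝ)) := by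
    ext ω
    simp only [Set.mem_setOf_eq, Set.mem_inter_iff, Set.mem_preimage,
      Set.mem_singleton_iff, Set.mem_prod, hobs ω, hg]
    have hmin : min (Ynmi ω + Ymi ω) 1 = 0 ↔ Ynmi ω = 0 ∧ Ymi ω = 0 := by omega
    rw [hmin]
    tauto
  -- Yobs takes values 0 or 1, so {Yobs = 1} is the complement of {Yobs = 0}
  have hset1 : {ω | Yobs ω = 1} = {ω | Yobs ω = 0}ᶜ := by
    ext ω
    simp only [Set.mem_setOf_eq, Set.mem_compl_iff, hobs ω]
    omega
  -- measurability
  have hm0 : MeasurableSet ({ω | Yobs ω = 0}) := by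
    rw [hset0]
    exact (hYnmi (measurableSet_singleton 0)).inter (hYmi (measurableSet_singleton 0))
  -- measure of {D = 0 ∧ Yobs = 1} equals measure of T1 := {Ynmi = 1} ∩ g⁻¹'({0}×{0})
  have hS1 : μ {ω | D ω = 0 ∧ Yobs ω = 1}
      = μ (Ynmi ⁻¹' {1} ∩ g ⁻¹' (({0} : Set ℕ) ×ˢ ({0} : Set ℝ))) := by
    set T1 := Ynmi ⁻¹' {1} ∩ g ⁻¹' (({0} : Set ℕ) ×ˢ ({0} : Set ℝ)) with hT1
    have hsub1 : {ω | D ω = 0 ∧ Yobs ω = 1} ⊆ T1 ∪ {ω | Ymi ω = 1 ∧ ¬ 0 < D ω} := by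
      intro ω hω
      obtain ⟨hd, hy⟩ := hω
      rcases hmi01 ω with hmi | hmi
      · left
        refine ⟨?_, ?_⟩
        · simp only [Set.mem_preimage, Set.mem_singleton_iff]
          rw [hobs ω, hmi] at hy
          have := hnmi01 ω
          omega
        · simp only [Set.mem_preimage, Set.mem_prod, Set.mem_singleton_iff, hg]
          exact ⟨hmi, hd⟩
      · right
        exact ⟨hmi, by rw [hd]; exact lt_irrefl 0⟩
    have hsub2 : T1 ⊆ {ω | D ω = 0 ∧ Yobs ω = 1} := by
      intro ω hω
      obtain ⟨h1, h2⟩ := hω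
      simp only [Set.mem_preimage, Set.mem_singleton_iff] at h1
      simp only [Set.mem_preimage, Set.mem_prod, Set.mem_singleton_iff, hg] at h2
      refine ⟨h2.2, ?_⟩
      rw [hobs ω, h1, h2.1]
      rfl
    refine le_antisymm ?_ (measure_mono hsub2)
    calc μ {ω | D ω = 0 ∧ Yobs ω = 1} ≤ μ (T1 ∪ {ω | Ymi ω = 1 ∧ ¬ 0 < D ω}) :=
          measure_mono hsub1
      _ ≤ μ T1 + μ {ω | Ymi ω = 1 ∧ ¬ 0 < D ω} := measure_union_le _ _
      _ = μ T1 := by rw [hsub, add_zero]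
  -- independence applied
  have hI1 : μ (Ynmi ⁻¹' {1} ∩ g ⁻¹' (({0} : Set ℕ) ×ˢ ({0} : Set ℝ)))
      = μ (Ynmi ⁻¹' {1}) * μ (g ⁻¹' (({0} : Set ℕ) ×ˢ ({0} : Set ℝ))) :=
    hindep.measure_inter_preimage_eq_mul _ _ (measurableSet_singleton 1) hBmeas
  have hI0 : μ (Ynmi ⁻¹' {0} ∩ g ⁻¹' (({0} : Set ℕ) ×ˢ ({0} : Set ℝ)))
      = μ (Ynmi ⁻¹' {0}) * μ (g ⁻¹' (({0} : Set ℕ) ×ˢ ({0} : Set ℝ))) :=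
    hindep.measure_inter_preimage_eq_mul _ _ (measurableSet_singleton 0) hBmeas
  have hInd0 : μ (Ynmi ⁻¹' {0} ∩ Ymi ⁻¹' {0}) = μ (Ynmi ⁻¹' {0}) * μ (Ymi ⁻¹' {0}) :=
    hindep01.measure_inter_preimage_eq_mul _ _ (measurableSet_singleton 0)
      (measurableSet_singleton 0)
  -- notation for reals
  set p := (μ (Ynmi ⁻¹' {1})).toReal with hp
  set q := (μ (Ynmi ⁻¹' {0})).toReal with hq
  set a := (μ (g ⁻¹' (({0} : Set ℕ) ×ˢ ({0} : Set ℝ)))).toReal with ha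
  set r := (μ (Ymi ⁻¹' {0})).toReal with hr
  -- q + p = 1
  have hpq : q + p = 1 := by
    have hdisj : Disjoint (Ynmi ⁻¹' {0}) (Ynmi ⁻¹' {1}) := by
      rw [Set.disjoint_left]
      intro ω h0 h1
      simp only [Set.mem_preimage, Set.mem_singleton_iff] at h0 h1
      omega
    have huniv : Ynmi ⁻¹' {0} ∪ Ynmi ⁻¹' {1} = Set.univ := by
      ext ω
      simp only [Set.mem_union, Set.mem_preimage, Set.mem_singleton_iff, Set.mem_univ, iff_true]
      exact hnmi01 ω
    have h := measure_union (μ := μ) hdisj (hYnmi (measurableSet_singleton 1))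
    rw [huniv, measure_univ] at h
    rw [hq, hp, ← ENNReal.toReal_add (measure_ne_top μ _) (measure_ne_top μ _), ← h]
    simp
  -- numerator and denominator identities
  have hnum1 : (μ {ω | D ω = 0 ∧ Yobs ω = 1}).toReal = p * a := by
    rw [hS1, hI1, ENNReal.toReal_mul]
  have hnum0 : (μ {ω | D ω = 0 ∧ Yobs ω = 0}).toReal = q * a := by
    rw [hS0, hI0, ENNReal.toReal_mul]
  have hy0 : (μ {ω | Yobs ω = 0}).toReal = q * r := by
    rw [hset0, hInd0, ENNReal.toReal_mul]
  have hy1 : (μ {ω | Yobs ω = 1}).toReal = 1 - q * r := by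
    have h := measure_add_measure_compl (μ := μ) hm0
    rw [hset1]
    have h2 : (μ {ω | Yobs ω = 0}).toReal + (μ {ω | Yobs ω = 0}ᶜ).toReal = 1 := by
      rw [← ENNReal.toReal_add (measure_ne_top μ _) (measure_ne_top μ _), h]
      simp
    rw [hy0] at h2
    linarith
  -- bounds
  have har : a ≤ r := by
    rw [ha, hr]
    refine ENNReal.toReal_mono (measure_ne_top μ _) (measure_mono ?_)
    intro ω hω
    simp only [Set.mem_preimage, Set.mem_prod, Set.mem_singleton_iff, hg] at hω ⊢
    exact hω.1
  have hr1 : r ≤ 1 := by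
    rw [hr]
    have := ENNReal.toReal_mono (a := μ (Ymi ⁻¹' {0})) (b := 1) ENNReal.one_ne_top prob_le_one
    simpa using this
  have ha0 : 0 ≤ a := ENNReal.toReal_nonneg
  have hq0 : 0 ≤ q := ENNReal.toReal_nonneg
  have hp0 : 0 ≤ p := ENNReal.toReal_nonneg
  -- finish
  rw [hnum1, hnum0, hy1, hy0]
  rw [hy0] at hY0
  rw [hy1] at hY1
  rw [div_le_div_iff₀ hY1 hY0]
  have hp' : p = 1 - q := by linarith
  have hkey : q * a * (1 - q * r) - p * a * (q * r) = q * (a * (1 - r)) := by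
    rw [hp']; ring
  nlinarith [mul_nonneg hq0 (mul_nonneg ha0 (sub_nonneg.mpr hr1))]
end
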